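/- For p = 2 and n = 6, the necklace element x_{112122} in S(gl_N)^{⊗2} is not fixed by the orientation-reversal involution τ_S when N ≥ 4: τ_S(x_{112122}) = x_{112212} ≠ x_{112122}. -/
import Mathlib


open MvPolynomial

/-- The necklace element `x_μ` of a 2-colored necklace `μ` of order `n` in `S(gl_N)^{⊗2}`,
the latter modelled as the polynomial algebra on two copies of the basis `e_{ij}` of `gl_N`:
variable `(s, i, j)` is the generator `e_{ij}` in tensor slot `s`. -/
noncomputable def neck (F : Type) [Field F] (N n : ℕ) (hn : 0 < n) (μ : ℕ → Fin 2) :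
    MvPolynomial (Fin 2 × Fin N × Fin N) F :=
  ∑ i : Fin n → Fin N, ∏ m : Fin n,
    X (μ m.val, i m, i ⟨(m.val + 1) % n, Nat.mod_lt _ hn⟩)

/-- The orientation-reversal involution `τ_S`, induced by the algebra map of `S(gl_N)^{⊗2}`
sending `e_{ij} ↦ e_{ji}` in each slot. -/
noncomputable def tauS (F : Type) [Field F] (N : ℕ) :
    MvPolynomial (Fin 2 × Fin N × Fin N) F →ₐ[F] MvPolynomial (Fin 2 × Fin N × Fin N) F :=
  rename fun q => (q.1, q.2.2, q.2.1)

/-- The color sequence `112122` (colors in `{1,2}` written as `{0,1}`). -/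
def c112122 : ℕ → Fin 2 := fun m => ![0, 0, 1, 0, 1, 1] ⟨m % 6, Nat.mod_lt _ (by omega)⟩

/-- The color sequence `112212`. -/
def c112212 : ℕ → Fin 2 := fun m => ![0, 0, 1, 1, 0, 1] ⟨m % 6, Nat.mod_lt _ (by omega)⟩


/-- The reversal permutation of vertices used in the reindexing. -/
def rperm : Equiv.Perm (Fin 6) :=
  ⟨![2,1,0,5,4,3], ![2,1,0,5,4,3], by decide, by decide⟩

/-- The matching permutation of edges used in the reindexing. -/
def pperm : Equiv.Perm (Fin 6) :=
  ⟨![1,0,5,4,3,2], ![1,0,5,4,3,2], by decide, by decide⟩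

/-- Indicator of a separating set of colored edges. -/
def W (a b c : ℕ) : ℕ :=
  if (a, b, c) ∈ ([(0,0,1),(0,1,2),(1,0,1),(1,2,0)] : List (ℕ × ℕ × ℕ)) then 1 else 0

lemma W_lt {a b c : ℕ} (h : W a b c ≠ 0) : b < 3 ∧ c < 3 := by
  unfold W at h
  split at h
  · rename_i hmem
    simp only [List.mem_cons, List.not_mem_nil, or_false, Prod.mk.injEq] at hmem
    omega
  · exact absurd rfl h

/-- The number of colored closed walks of color pattern `μ` within the separating edge set. -/
def cnt (μ : ℕ → Fin 2) (K : ℕ) : ℕ :=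
  ∑ i : Fin 6 → Fin K, ∏ m : Fin 6,
    W (μ m.val).val (i m).val (i ⟨(m.val + 1) % 6, Nat.mod_lt _ (by omega)⟩).val

set_option maxRecDepth 40000 in
lemma cnt_c112122 : cnt c112122 3 = 0 := by decide

set_option maxRecDepth 40000 in
lemma cnt_c112212 : cnt c112212 3 = 1 := by decide

lemma eval_neck (F : Type) [Field F] (N : ℕ) (hn : (0:ℕ) < 6) (μ : ℕ → Fin 2) :
    eval (fun q : Fin 2 × Fin N × Fin N => ((W q.1.val q.2.1.val q.2.2.val : ℕ) : F))
      (neck F N 6 hn μ) = ((cnt μ N : ℕ) : F) := by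
  rw [neck, cnt, map_sum, Nat.cast_sum]
  refine Finset.sum_congr rfl fun i _ => ?_
  rw [map_prod, Nat.cast_prod]
  exact Finset.prod_congr rfl fun m _ => by rw [eval_X]

lemma cnt_red (N : ℕ) (hN : 3 ≤ N) (μ : ℕ → Fin 2) : cnt μ N = cnt μ 3 := by
  unfold cnt
  rw [← Finset.sum_filter_of_ne
    (p := fun i : Fin 6 → Fin N => ∀ m : Fin 6, (i m).val < 3)
    (fun i _ hne m => by
      rw [Finset.prod_ne_zero_iff] at hne
      exact (W_lt (hne m (Finset.mem_univ m))).1)]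
  refine Finset.sum_nbij'
    (i := fun (a : Fin 6 → Fin N) (m : Fin 6) => (⟨(a m).val % 3, Nat.mod_lt _ (by omega)⟩ : Fin 3))
    (j := fun (b : Fin 6 → Fin 3) (m : Fin 6) => Fin.castLE hN (b m))
    (fun a _ => Finset.mem_univ _)
    (fun b _ => by
      simp only [Finset.mem_filter, Finset.mem_univ, true_and]
      exact fun m => (b m).isLt)
    (fun a ha => by
      have h := (Finset.mem_filter.mp ha).2
      funext m
      exact Fin.ext (by simp [Nat.mod_eq_of_lt (h m)]))
    (fun b _ => by
      funext m
      exact Fin.ext (by simp [Nat.mod_eq_of_lt (b m).isLt]))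
    (fun a ha => by
      have h := (Finset.mem_filter.mp ha).2
      exact Finset.prod_congr rfl fun m _ => by
        simp only [Nat.mod_eq_of_lt (h _)])

/-- For `N ≥ 4`, `τ_S(x_{112122}) = x_{112212} ≠ x_{112122}` in `S(gl_N)^{⊗2}`. -/
theorem necklace112122_not_invariant (F : Type) [Field F] [CharZero F] (N : ℕ) (hN : 4 ≤ N) :
    tauS F N (neck F N 6 (by omega) c112122) = neck F N 6 (by omega) c112212 ∧
    neck F N 6 (by omega) c112212 ≠ neck F N 6 (by omega) c112122 := by
  constructor
  · unfold tauS neck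
    rw [map_sum]
    refine Fintype.sum_equiv (rperm.arrowCongr (Equiv.refl (Fin N))) _ _ (fun i => ?_)
    rw [map_prod]
    simp only [rename_X]
    refine Fintype.prod_equiv pperm _ _ (fun m => ?_)
    fin_cases m <;> rfl
  · intro hEq
    have h1 := congrArg
      (eval (fun q : Fin 2 × Fin N × Fin N => ((W q.1.val q.2.1.val q.2.2.val : ℕ) : F))) hEq
    rw [eval_neck, eval_neck, cnt_red N (by omega), cnt_red N (by omega),
      cnt_c112122, cnt_c112212] at h1
    simp at h1
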